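/- With (W_n) and Π_∞ as above, the limit Π_∞ has empty boundary (every (d−2)-facet lies in an even number of its plaquettes) and has no finite connected components in the plaquette adjacency graph. -/

import Mathlib

open Set Relation Filter

/-- Vertices of the lattice `ℤ^d`. -/
abbrev V (d : ℕ) := Fin d → ℤ

/-- Nearest-neighbour adjacency in `ℤ^d`: `x` and `y` differ by `1` in exactly
one coordinate. -/
def latAdj {d : ℕ} (x y : V d) : Prop :=
  ∃ i, (x i - y i).natAbs = 1 ∧ ∀ j, j ≠ i → x j = y j

/-- Connectivity in the complement of `S` (paths avoiding `S`). -/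
def connAvoid {d : ℕ} (S : Set (V d)) (a b : V d) : Prop :=
  ReflTransGen (fun u v => latAdj u v ∧ u ∉ S ∧ v ∉ S) a b

/-- The connected component of `w` in the complement of `S`. -/
def compOff {d : ℕ} (S : Set (V d)) (w : V d) : Set (V d) :=
  {z | connAvoid S w z}

/-- `y` lies outside `S` and is joined to infinity off `S` (its component in
the complement of `S` is infinite). -/
def toInfOff {d : ℕ} (S : Set (V d)) (y : V d) : Prop :=
  y ∉ S ∧ (compOff S y).Infinite

/-- `S ⊆ ℤ^d` is connected (as an induced subgraph of the lattice). -/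
def IsLatConnected {d : ℕ} (S : Set (V d)) : Prop :=
  ∀ a ∈ S, ∀ b ∈ S, ReflTransGen (fun u v => latAdj u v ∧ u ∈ S ∧ v ∈ S) a b

/-- `S` together with all its holes (the finite components of its complement). -/
def fillHoles {d : ℕ} (S : Set (V d)) : Set (V d) :=
  S ∪ {w | w ∉ S ∧ (compOff S w).Finite}

/-- We identify a plaquette with its dual edge, realized as an unordered pair of
adjacent lattice points.  `PiS S` is the set of plaquettes dual to edges
`⟨x,y⟩` with `x ∈ S` and `y ∉ S` joined to infinity off `S`. -/
def PiS {d : ℕ} (S : Set (V d)) : Set (Sym2 (V d)) :=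
  {e | ∃ x y, latAdj x y ∧ x ∈ S ∧ toInfOff S y ∧ e = s(x, y)}

/-- The `i`-th unit coordinate vector. -/
def uv {d : ℕ} (i : Fin d) : V d := fun k => if k = i then 1 else 0

/-- A unit square (2-facet) of `ℤ^d`; its dual is a `(d-2)`-facet of the dual
lattice `ℤ^d + (1/2,…,1/2)`. -/
structure Square (d : ℕ) where
  corner : V d
  i : Fin d
  j : Fin d
  hij : i ≠ j

/-- The four edges of a unit square.  A plaquette (identified with its dual
edge `e`) is incident to the `(d-2)`-facet dual to the square `F` exactly when
`e` is one of the four edges of `F`. -/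
def edgesOf {d : ℕ} (F : Square d) : Set (Sym2 (V d)) :=
  {s(F.corner, F.corner + uv F.i), s(F.corner, F.corner + uv F.j),
   s(F.corner + uv F.i, F.corner + uv F.i + uv F.j),
   s(F.corner + uv F.j, F.corner + uv F.i + uv F.j)}

/-- A set of plaquettes has empty boundary if every `(d-2)`-facet of the dual
lattice is incident to an even number of its members. -/
def NoBoundary {d : ℕ} (P : Set (Sym2 (V d))) : Prop :=
  ∀ F : Square d, Even (edgesOf F ∩ P).ncard

/-- Two plaquettes are adjacent if their intersection is a `(d-2)`-facet,
equivalently their dual edges are distinct edges of a common unit square. -/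
def plaqAdj {d : ℕ} (e₁ e₂ : Sym2 (V d)) : Prop :=
  e₁ ≠ e₂ ∧ ∃ F : Square d, e₁ ∈ edgesOf F ∧ e₂ ∈ edgesOf F

/-- A set of plaquettes is connected for the adjacency relation `plaqAdj`. -/
def PlaqConnected {d : ℕ} (P : Set (Sym2 (V d))) : Prop :=
  ∀ a ∈ P, ∀ b ∈ P, ReflTransGen (fun u v => plaqAdj u v ∧ u ∈ P ∧ v ∈ P) a b

-- basic lemmas
lemma uv_self {d : ℕ} (i : Fin d) : uv i i = 1 := by simp [uv]
lemma uv_ne {d : ℕ} {i j : Fin d} (h : j ≠ i) : uv i j = 0 := by simp [uv, h]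

lemma latAdj_symm {d : ℕ} {x y : V d} (h : latAdj x y) : latAdj y x := by
  obtain ⟨i, h1, h2⟩ := h
  exact ⟨i, by rw [← Int.natAbs_neg]; simpa using h1, fun j hj => (h2 j hj).symm⟩

lemma latAdj_step {d : ℕ} (x : V d) (i : Fin d) : latAdj x (x + uv i) := by
  refine ⟨i, ?_, fun j hj => ?_⟩
  · simp [uv_self]
  · simp [uv_ne hj]

lemma latAdj_cases {d : ℕ} {x y : V d} (h : latAdj x y) :
    ∃ i, y = x + uv i ∨ x = y + uv i := by
  obtain ⟨i, h1, h2⟩ := h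
  refine ⟨i, ?_⟩
  rcases Int.natAbs_eq_iff.mp h1 with h | h
  · right
    funext j
    by_cases hj : j = i
    · subst hj; simp [uv_self]; omega
    · simp [uv_ne hj, (h2 j hj).symm]
  · left
    funext j
    by_cases hj : j = i
    · subst hj; simp [uv_self]; omega
    · simp [uv_ne hj, h2 j hj]

def bd {d : ℕ} (A : Set (V d)) : Set (Sym2 (V d)) :=
  {e | ∃ x y, latAdj x y ∧ x ∈ A ∧ y ∉ A ∧ e = s(x, y)}

lemma mem_bd_iff {d : ℕ} {A : Set (V d)} {x y : V d} (h : latAdj x y) :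
    s(x, y) ∈ bd A ↔ ((x ∈ A ∧ y ∉ A) ∨ (y ∈ A ∧ x ∉ A)) := by
  constructor
  · rintro ⟨u, v, huv, hu, hv, he⟩
    rw [Sym2.eq_iff] at he
    rcases he with ⟨rfl, rfl⟩ | ⟨rfl, rfl⟩
    · exact Or.inl ⟨hu, hv⟩
    · exact Or.inr ⟨hu, hv⟩
  · rintro (⟨hx, hy⟩ | ⟨hy, hx⟩)
    · exact ⟨x, y, h, hx, hy, rfl⟩
    · exact ⟨y, x, latAdj_symm h, hy, hx, Sym2.eq_swap.symm⟩

lemma mem_PiS_iff {d : ℕ} {S : Set (V d)} {x y : V d} (h : latAdj x y) :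
    s(x, y) ∈ PiS S ↔ ((x ∈ S ∧ toInfOff S y) ∨ (y ∈ S ∧ toInfOff S x)) := by
  constructor
  · rintro ⟨u, v, huv, hu, hv, he⟩
    rw [Sym2.eq_iff] at he
    rcases he with ⟨rfl, rfl⟩ | ⟨rfl, rfl⟩
    · exact Or.inl ⟨hu, hv⟩
    · exact Or.inr ⟨hu, hv⟩
  · rintro (⟨hx, hy⟩ | ⟨hy, hx⟩)
    · exact ⟨x, y, h, hx, hy, rfl⟩
    · exact ⟨y, x, latAdj_symm h, hy, hx, Sym2.eq_swap.symm⟩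

lemma connAvoid_symm {d : ℕ} {S : Set (V d)} : Symmetric (connAvoid S) :=
  fun a b h => ReflTransGen.mono (fun u v (huv : latAdj v u ∧ v ∉ S ∧ u ∉ S) =>
    (⟨latAdj_symm huv.1, huv.2.2, huv.2.1⟩ : latAdj u v ∧ u ∉ S ∧ v ∉ S)) b a
    (ReflTransGen.swap (r := fun u v => latAdj u v ∧ u ∉ S ∧ v ∉ S) b a h)

lemma compOff_eq_of_adj {d : ℕ} {S : Set (V d)} {x y : V d} (h : latAdj x y)
    (hx : x ∉ S) (hy : y ∉ S) : compOff S x = compOff S y := by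
  ext z
  constructor
  · intro hz
    exact ReflTransGen.head ⟨latAdj_symm h, hy, hx⟩ hz
  · intro hz
    exact ReflTransGen.head ⟨h, hx, hy⟩ hz

lemma compOff_anti {d : ℕ} {S S' : Set (V d)} (h : S ⊆ S') (w : V d) :
    compOff S' w ⊆ compOff S w := fun z hz =>
  ReflTransGen.mono (fun u v (huv : latAdj u v ∧ u ∉ S' ∧ v ∉ S') =>
    (⟨huv.1, fun hu => huv.2.1 (h hu), fun hv => huv.2.2 (h hv)⟩ : latAdj u v ∧ u ∉ S ∧ v ∉ S)) _ _ hz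

lemma toInfOff_anti {d : ℕ} {S S' : Set (V d)} (h : S ⊆ S') {y : V d}
    (hy : toInfOff S' y) : toInfOff S y :=
  ⟨fun hyS => hy.1 (h hyS), hy.2.mono (compOff_anti h y)⟩

lemma PiS_eq_bd_fillHoles {d : ℕ} (S : Set (V d)) : PiS S = bd (fillHoles S) := by
  ext e
  constructor
  · rintro ⟨x, y, h, hx, hy, rfl⟩
    refine ⟨x, y, h, Or.inl hx, ?_, rfl⟩
    rintro (hyS | ⟨_, hfin⟩)
    · exact hy.1 hyS
    · exact hy.2 hfin
  · rintro ⟨x, y, h, hx, hy, rfl⟩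
    have hyS : y ∉ S := fun hyS => hy (Or.inl hyS)
    have hyinf : (compOff S y).Infinite := by
      by_contra hfin
      exact hy (Or.inr ⟨hyS, Set.not_infinite.mp hfin⟩)
    refine ⟨x, y, h, ?_, ⟨hyS, hyinf⟩, rfl⟩
    rcases hx with hxS | ⟨hxS, hfin⟩
    · exact hxS
    · exact absurd (compOff_eq_of_adj h hxS hyS ▸ hfin) (fun hf => hyinf hf)

-- four-element intersection cardinality
lemma ncard_four_inter {α : Type*} {a b c d : α} (P : Set α)
    [inst : ∀ x : α, Decidable (x ∈ P)] (hab : a ≠ b) (hac : a ≠ c) (had : a ≠ d) (hbc : b ≠ c) (hbd : b ≠ d) (hcd : c ≠ d) :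
    (({a, b, c, d} : Set α) ∩ P).ncard =
      (if a ∈ P then 1 else 0) + (if b ∈ P then 1 else 0) +
      (if c ∈ P then 1 else 0) + (if d ∈ P then 1 else 0) := by
  classical
  have h : (({a, b, c, d} : Set α) ∩ P) =
      ↑((({a, b, c, d} : Finset α)).filter (· ∈ P)) := by
    ext x
    simp [and_comm]
  rw [h, Set.ncard_coe_finset, Finset.card_filter]
  rw [Finset.sum_insert (by simp [hab, hac, had]),
    Finset.sum_insert (by simp [hbc, hbd]),
    Finset.sum_insert (by simp [hcd]), Finset.sum_singleton]
  omega

lemma apply_add_uv {d : ℕ} (x : V d) (i j : Fin d) :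
    (x + uv i) j = x j + if j = i then 1 else 0 := by
  simp [uv]

section SquarePts
variable {d : ℕ} (F : Square d)

lemma sq_ne1 : F.corner ≠ F.corner + uv F.i := fun h => by
  have := congrFun h F.i; rw [Pi.add_apply, uv_self] at this; omega

lemma sq_ne2 : F.corner ≠ F.corner + uv F.j := fun h => by
  have := congrFun h F.j; rw [Pi.add_apply, uv_self] at this; omega

lemma sq_ne3 : F.corner ≠ F.corner + uv F.i + uv F.j := fun h => by
  have := congrFun h F.i
  rw [Pi.add_apply, Pi.add_apply, uv_self, uv_ne F.hij] at this; omega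

lemma sq_ne4 : F.corner + uv F.i ≠ F.corner + uv F.j := fun h => by
  have := congrFun h F.i
  rw [Pi.add_apply, Pi.add_apply, uv_self, uv_ne F.hij] at this; omega

lemma sq_ne5 : F.corner + uv F.i ≠ F.corner + uv F.i + uv F.j := fun h => by
  have := congrFun h F.j
  rw [Pi.add_apply, Pi.add_apply, Pi.add_apply, uv_self] at this; omega

lemma sq_ne6 : F.corner + uv F.j ≠ F.corner + uv F.i + uv F.j := fun h => by
  have := congrFun h F.i
  rw [Pi.add_apply, Pi.add_apply, Pi.add_apply, uv_self,
    uv_ne F.hij] at this; omega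

lemma sqe_ne12 : s(F.corner, F.corner + uv F.i) ≠ s(F.corner, F.corner + uv F.j) := fun h => by
  rw [Sym2.eq_iff] at h
  rcases h with ⟨h1, h2⟩ | ⟨h1, h2⟩
  · exact sq_ne4 F h2
  · exact sq_ne2 F h1

lemma sqe_ne13 : s(F.corner, F.corner + uv F.i) ≠
    s(F.corner + uv F.i, F.corner + uv F.i + uv F.j) := fun h => by
  rw [Sym2.eq_iff] at h
  rcases h with ⟨h1, h2⟩ | ⟨h1, h2⟩
  · exact sq_ne1 F h1
  · exact sq_ne3 F h1

lemma sqe_ne14 : s(F.corner, F.corner + uv F.i) ≠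
    s(F.corner + uv F.j, F.corner + uv F.i + uv F.j) := fun h => by
  rw [Sym2.eq_iff] at h
  rcases h with ⟨h1, h2⟩ | ⟨h1, h2⟩
  · exact sq_ne2 F h1
  · exact sq_ne3 F h1

lemma sqe_ne23 : s(F.corner, F.corner + uv F.j) ≠
    s(F.corner + uv F.i, F.corner + uv F.i + uv F.j) := fun h => by
  rw [Sym2.eq_iff] at h
  rcases h with ⟨h1, h2⟩ | ⟨h1, h2⟩
  · exact sq_ne1 F h1
  · exact sq_ne3 F h1

lemma sqe_ne24 : s(F.corner, F.corner + uv F.j) ≠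
    s(F.corner + uv F.j, F.corner + uv F.i + uv F.j) := fun h => by
  rw [Sym2.eq_iff] at h
  rcases h with ⟨h1, h2⟩ | ⟨h1, h2⟩
  · exact sq_ne2 F h1
  · exact sq_ne3 F h1

lemma sqe_ne34 : s(F.corner + uv F.i, F.corner + uv F.i + uv F.j) ≠
    s(F.corner + uv F.j, F.corner + uv F.i + uv F.j) := fun h => by
  rw [Sym2.eq_iff] at h
  rcases h with ⟨h1, h2⟩ | ⟨h1, h2⟩
  · exact sq_ne4 F h1
  · exact sq_ne5 F h1

lemma ncard_edgesOf_inter {d : ℕ} (F : Square d) (P : Set (Sym2 (V d)))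
    [∀ e : Sym2 (V d), Decidable (e ∈ P)] :
    (edgesOf F ∩ P).ncard =
      (if s(F.corner, F.corner + uv F.i) ∈ P then 1 else 0) +
      (if s(F.corner, F.corner + uv F.j) ∈ P then 1 else 0) +
      (if s(F.corner + uv F.i, F.corner + uv F.i + uv F.j) ∈ P then 1 else 0) +
      (if s(F.corner + uv F.j, F.corner + uv F.i + uv F.j) ∈ P then 1 else 0) := by
  classical
  exact ncard_four_inter P (sqe_ne12 F) (sqe_ne13 F) (sqe_ne14 F) (sqe_ne23 F)
    (sqe_ne24 F) (sqe_ne34 F)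

end SquarePts

-- latAdj between square corners
lemma latAdj_sq2 {d : ℕ} (x : V d) (i j : Fin d) :
    latAdj (x + uv j) (x + uv i + uv j) := by
  have h : x + uv i + uv j = (x + uv j) + uv i := by abel
  rw [h]
  exact latAdj_step _ i

open Classical in
lemma noBoundary_bd {d : ℕ} (A : Set (V d)) : NoBoundary (bd A) := by
  intro F
  rw [ncard_edgesOf_inter]
  rw [if_congr (mem_bd_iff (latAdj_step F.corner F.i)) rfl rfl,
    if_congr (mem_bd_iff (latAdj_step F.corner F.j)) rfl rfl,
    if_congr (mem_bd_iff (latAdj_step (F.corner + uv F.i) F.j)) rfl rfl,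
    if_congr (mem_bd_iff (latAdj_sq2 F.corner F.i F.j)) rfl rfl]
  by_cases h1 : F.corner ∈ A <;>
    by_cases h2 : F.corner + uv F.i ∈ A <;>
    by_cases h3 : F.corner + uv F.j ∈ A <;>
    by_cases h4 : F.corner + uv F.i + uv F.j ∈ A <;>
    simp [h1, h2, h3, h4] <;> decide

lemma noBoundary_PiS {d : ℕ} (S : Set (V d)) : NoBoundary (PiS S) := by
  rw [PiS_eq_bd_fillHoles]
  exact noBoundary_bd _

lemma bd_unique {d : ℕ} (i0 : Fin d) {A A' : Set (V d)}
    (hA : A.Finite) (hA' : A'.Finite) (h : bd A = bd A') : A = A' := by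
  by_contra hne
  set D : Set (V d) := (A \ A') ∪ (A' \ A) with hDdef
  have hDne : D.Nonempty := by
    by_contra hDe
    rw [Set.not_nonempty_iff_eq_empty] at hDe
    apply hne
    ext v
    constructor
    · intro hv
      by_contra hv'
      have : v ∈ D := Or.inl ⟨hv, hv'⟩
      rw [hDe] at this
      exact this
    · intro hv
      by_contra hv'
      have : v ∈ D := Or.inr ⟨hv, hv'⟩
      rw [hDe] at this
      exact this
  have hDfin : D.Finite := hA.diff.union hA'.diff
  obtain ⟨v, hvD, hvmax⟩ := Set.exists_max_image D (fun u => u i0) hDfin hDne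
  have hw : v + uv i0 ∉ D := by
    intro hw
    have := hvmax _ hw
    rw [Pi.add_apply, uv_self] at this
    omega
  have hadj := latAdj_step v i0
  have h1 : (s(v, v + uv i0) ∈ bd A) ↔ (s(v, v + uv i0) ∈ bd A') := by rw [h]
  rw [mem_bd_iff hadj, mem_bd_iff hadj] at h1
  have hwA : v + uv i0 ∈ A ↔ v + uv i0 ∈ A' := by
    constructor
    · intro hx; by_contra hx'; exact hw (Or.inl ⟨hx, hx'⟩)
    · intro hx; by_contra hx'; exact hw (Or.inr ⟨hx, hx'⟩)
  rcases hvD with ⟨hv1, hv2⟩ | ⟨hv1, hv2⟩ <;> tauto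

lemma edgesOf_corner_mem {d : ℕ} {F : Square d} {x y : V d}
    (h : s(x, y) ∈ edgesOf F) :
    F.corner ∈ ({x, y} ∪ (⋃ j : Fin d, {x - uv j, y - uv j}) : Set (V d)) := by
  have sub : ∀ (a : V d) (j : Fin d), a + uv j ∈ ({x, y} : Set (V d)) →
      a ∈ ({x, y} ∪ (⋃ j : Fin d, {x - uv j, y - uv j}) : Set (V d)) := by
    intro a j hb
    right
    refine Set.mem_iUnion.mpr ⟨j, ?_⟩
    rcases hb with hb | hb
    · exact Or.inl (eq_sub_of_add_eq hb)
    · exact Or.inr (eq_sub_of_add_eq hb)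
  simp only [edgesOf, Set.mem_insert_iff, Set.mem_singleton_iff] at h
  rcases h with h | h | h | h <;> rw [Sym2.eq_iff] at h
  · rcases h with ⟨h1, _⟩ | ⟨_, h2⟩
    · exact Or.inl (Or.inl h1.symm)
    · exact Or.inl (Or.inr h2.symm)
  · rcases h with ⟨h1, _⟩ | ⟨_, h2⟩
    · exact Or.inl (Or.inl h1.symm)
    · exact Or.inl (Or.inr h2.symm)
  · rcases h with ⟨h1, _⟩ | ⟨_, h2⟩
    · exact sub _ F.i (Or.inl h1.symm)
    · exact sub _ F.i (Or.inr h2.symm)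
  · rcases h with ⟨h1, _⟩ | ⟨_, h2⟩
    · exact sub _ F.j (Or.inl h1.symm)
    · exact sub _ F.j (Or.inr h2.symm)

lemma nbrs_finite {d : ℕ} (e : Sym2 (V d)) : {e' | plaqAdj e e'}.Finite := by
  induction e using Sym2.ind with
  | _ x y =>
  have hSfin : (({x, y} ∪ (⋃ j : Fin d, {x - uv j, y - uv j})) : Set (V d)).Finite := by
    apply ((Set.finite_singleton y).insert x).union
    exact Set.finite_iUnion fun j => (Set.finite_singleton _).insert _
  have hsub : {e' | plaqAdj s(x, y) e'} ⊆
      ⋃ c ∈ ({x, y} ∪ (⋃ j : Fin d, {x - uv j, y - uv j}) : Set (V d)),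
        ⋃ i : Fin d, ⋃ j : Fin d,
        ({s(c, c + uv i), s(c, c + uv j),
          s(c + uv i, c + uv i + uv j), s(c + uv j, c + uv i + uv j)} : Set (Sym2 (V d))) := by
    rintro e' ⟨hne, F, heF, he'F⟩
    refine Set.mem_biUnion (edgesOf_corner_mem heF) ?_
    exact Set.mem_iUnion.mpr ⟨F.i, Set.mem_iUnion.mpr ⟨F.j, he'F⟩⟩
  refine Set.Finite.subset ?_ hsub
  refine Set.Finite.biUnion hSfin fun c _ => ?_
  refine Set.finite_iUnion fun i => Set.finite_iUnion fun j => ?_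
  exact ((((Set.finite_singleton _).insert _).insert _).insert _)

section GSec
variable {d : ℕ} (K : Set (Sym2 (V d))) (i0 : Fin d)

def colEdge (v : V d) (k : ℕ) : Sym2 (V d) := s(v + k • uv i0, v + (k + 1) • uv i0)

def crossSet (v : V d) : Set ℕ := {k | colEdge i0 v k ∈ K}

noncomputable def gpar (v : V d) : ZMod 2 := ((crossSet K i0 v).ncard : ZMod 2)

lemma sym2_congr {α : Type*} {x y x' y' : α} (hx : x = x') (hy : y = y') :
    s(x, y) = s(x', y') := by rw [hx, hy]

lemma nsmul_uv_self (k : ℕ) (v : V d) : (v + k • uv i0) i0 = v i0 + (k : ℤ) := by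
  simp [uv_self]

lemma nsmul_uv_ne {j : Fin d} (h : j ≠ i0) (k : ℕ) (v : V d) :
    (v + k • uv i0) j = v j := by
  simp [uv_ne h]

lemma colEdge_inj (v : V d) : Function.Injective (colEdge i0 v) := by
  intro k k' h
  rw [colEdge, colEdge, Sym2.eq_iff] at h
  rcases h with ⟨h1, _⟩ | ⟨h1, h2⟩
  · have := congrFun h1 i0
    rw [nsmul_uv_self, nsmul_uv_self] at this
    omega
  · have e1 := congrFun h1 i0
    have e2 := congrFun h2 i0
    rw [nsmul_uv_self, nsmul_uv_self] at e1
    rw [nsmul_uv_self, nsmul_uv_self] at e2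
    omega

lemma crossSet_finite (hK : K.Finite) (v : V d) : (crossSet K i0 v).Finite := by
  have : crossSet K i0 v = (colEdge i0 v) ⁻¹' K := rfl
  rw [this]
  exact Set.Finite.preimage ((colEdge_inj i0 v).injOn) hK

lemma colEdge_succ (v : V d) (k : ℕ) :
    colEdge i0 v (k + 1) = colEdge i0 (v + uv i0) k := by
  rw [colEdge, colEdge]
  exact sym2_congr (by rw [succ_nsmul]; abel) (by rw [succ_nsmul, succ_nsmul]; abel)

lemma colEdge_zero (v : V d) : colEdge i0 v 0 = s(v, v + uv i0) := by
  rw [colEdge]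
  exact sym2_congr (by rw [zero_nsmul]; abel)
    (by rw [show (0 + 1 : ℕ) = 1 from rfl, one_nsmul])

open Classical in
noncomputable def ind {α : Type*} (K : Set α) (e : α) : ZMod 2 := if e ∈ K then 1 else 0

lemma ind_of_mem {α : Type*} {K : Set α} {e : α} (h : e ∈ K) : ind K e = 1 := by
  rw [ind, if_pos h]

lemma ind_of_not_mem {α : Type*} {K : Set α} {e : α} (h : e ∉ K) : ind K e = 0 := by
  rw [ind, if_neg h]

lemma ind_eq_one_iff {α : Type*} {K : Set α} {e : α} : ind K e = 1 ↔ e ∈ K := by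
  constructor
  · intro h
    by_contra hc
    rw [ind_of_not_mem hc] at h
    exact absurd h (by decide)
  · exact ind_of_mem

lemma gpar_vert (hK : K.Finite) (v : V d) :
    gpar K i0 v = ind K (s(v, v + uv i0)) + gpar K i0 (v + uv i0) := by
  classical
  have himg : ∀ k : ℕ, k + 1 ∈ Nat.succ '' (crossSet K i0 (v + uv i0)) ↔
      k ∈ crossSet K i0 (v + uv i0) := by
    intro k
    constructor
    · rintro ⟨m, hm, hmk⟩
      have : m = k := by omega
      exact this ▸ hm
    · intro hk; exact ⟨k, hk, rfl⟩
  have hfin : (Nat.succ '' (crossSet K i0 (v + uv i0))).Finite :=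
    (crossSet_finite K i0 hK _).image _
  have hcard : (Nat.succ '' (crossSet K i0 (v + uv i0))).ncard =
      (crossSet K i0 (v + uv i0)).ncard :=
    Set.ncard_image_of_injective _ Nat.succ_injective
  by_cases h0 : colEdge i0 v 0 ∈ K
  · have hset : crossSet K i0 v = insert 0 (Nat.succ '' (crossSet K i0 (v + uv i0))) := by
      ext k
      cases k with
      | zero => simp [crossSet, h0]
      | succ k =>
        simp only [Set.mem_insert_iff, Nat.succ_ne_zero, false_or]
        rw [show (k + 1 ∈ Nat.succ '' (crossSet K i0 (v + uv i0))) ↔ _ from himg k]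
        show colEdge i0 v (k + 1) ∈ K ↔ _
        rw [colEdge_succ]
        rfl
    rw [gpar, hset, Set.ncard_insert_of_notMem (by simp) hfin, hcard,
      ind_of_mem ((colEdge_zero i0 v) ▸ h0)]
    push_cast
    ring_nf
    rfl
  · have hset : crossSet K i0 v = Nat.succ '' (crossSet K i0 (v + uv i0)) := by
      ext k
      cases k with
      | zero => simp [crossSet, h0]
      | succ k =>
        rw [show (k + 1 ∈ Nat.succ '' (crossSet K i0 (v + uv i0))) ↔ _ from himg k]
        show colEdge i0 v (k + 1) ∈ K ↔ _
        rw [colEdge_succ]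
        rfl
    rw [gpar, hset, hcard, ind_of_not_mem ((colEdge_zero i0 v) ▸ h0)]
    rw [zero_add]
    rfl
end GSec

section GSec2
variable {d : ℕ} {K : Set (Sym2 (V d))} (i0 : Fin d)

lemma even_cast_zmod2 {n : ℕ} (h : Even n) : (n : ZMod 2) = 0 := by
  obtain ⟨m, rfl⟩ := h
  push_cast
  ring_nf
  rw [show (2 : ZMod 2) = 0 from rfl]
  ring

open Classical in
lemma bridge4 (hnb : NoBoundary K) (F : Square d) :
    ind K (s(F.corner, F.corner + uv F.i)) + ind K (s(F.corner, F.corner + uv F.j)) +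
      ind K (s(F.corner + uv F.i, F.corner + uv F.i + uv F.j)) +
      ind K (s(F.corner + uv F.j, F.corner + uv F.i + uv F.j)) = 0 := by
  have h := even_cast_zmod2 ((ncard_edgesOf_inter F K) ▸ hnb F)
  push_cast at h
  convert h using 2 <;> simp [ind]
end GSec2

section GSec3
variable {d : ℕ} {K : Set (Sym2 (V d))}

lemma telescope2 (f : ℕ → ZMod 2) (N : ℕ) :
    ∑ k ∈ Finset.range N, (f k + f (k + 1)) = f 0 + f N := by
  induction N with
  | zero =>
    simp only [Finset.range_zero, Finset.sum_empty]
    have h0 : ∀ x : ZMod 2, 0 = x + x := by decide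
    exact h0 _
  | succ N ih =>
    rw [Finset.sum_range_succ, ih]
    have : ∀ x y z : ZMod 2, x + y + (y + z) = x + z := by decide
    exact this _ _ _

lemma gpar_eq_sum (i0 : Fin d) (hK : K.Finite) (v : V d) {N : ℕ}
    (hN : ∀ k, N ≤ k → colEdge i0 v k ∉ K) :
    gpar K i0 v = ∑ k ∈ Finset.range N, ind K (colEdge i0 v k) := by
  classical
  have hset : crossSet K i0 v =
      ↑((Finset.range N).filter (fun k => colEdge i0 v k ∈ K)) := by
    ext k
    simp only [Finset.coe_filter, Finset.mem_range, Set.mem_setOf_eq]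
    constructor
    · intro hk
      refine ⟨?_, hk⟩
      by_contra hc
      exact hN k (by omega) hk
    · exact fun h => h.2
  rw [gpar, hset, Set.ncard_coe_finset, Finset.card_filter]
  rw [Nat.cast_sum]
  refine Finset.sum_congr rfl fun k _ => ?_
  rw [ind]
  split_ifs <;> simp

lemma rung_inj (i0 i : Fin d) (hi : i ≠ i0) (v : V d) {k k' : ℕ}
    (h : s(v + k • uv i0, v + k • uv i0 + uv i) = s(v + k' • uv i0, v + k' • uv i0 + uv i)) :
    k = k' := by
  rw [Sym2.eq_iff] at h
  rcases h with ⟨h1, _⟩ | ⟨h1, h2⟩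
  · have := congrFun h1 i0
    simp [uv, Ne.symm hi] at this
    omega
  · have e1 := congrFun h1 i0
    simp [uv, Ne.symm hi] at e1
    omega

lemma gpar_horiz (hK : K.Finite) (hnb : NoBoundary K) (i0 i : Fin d) (hi : i ≠ i0)
    (v : V d) :
    gpar K i0 v + gpar K i0 (v + uv i) = ind K (s(v, v + uv i)) := by
  classical
  set r : ℕ → ZMod 2 := fun k => ind K (s(v + k • uv i0, v + k • uv i0 + uv i)) with hr
  -- square identity
  have hsq : ∀ k : ℕ, ind K (colEdge i0 v k) + r k + r (k + 1) +
      ind K (colEdge i0 (v + uv i) k) = 0 := by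
    intro k
    have hb := bridge4 hnb ⟨v + k • uv i0, i0, i, Ne.symm hi⟩
    simp only at hb
    have e1 : s(v + k • uv i0, v + k • uv i0 + uv i0) = colEdge i0 v k :=
      sym2_congr rfl (by rw [succ_nsmul]; abel)
    have e3 : s(v + k • uv i0 + uv i0, v + k • uv i0 + uv i0 + uv i) =
        s(v + (k + 1) • uv i0, v + (k + 1) • uv i0 + uv i) :=
      sym2_congr (by rw [succ_nsmul]; abel) (by rw [succ_nsmul]; abel)
    have e4 : s(v + k • uv i0 + uv i, v + k • uv i0 + uv i0 + uv i) =
        colEdge i0 (v + uv i) k := by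
      rw [colEdge]
      exact sym2_congr (by abel) (by rw [succ_nsmul]; abel)
    rw [e1, e3, e4] at hb
    calc ind K (colEdge i0 v k) + r k + r (k + 1) + ind K (colEdge i0 (v + uv i) k)
        = ind K (colEdge i0 v k) + r k +
          ind K (s(v + (k+1) • uv i0, v + (k+1) • uv i0 + uv i)) +
          ind K (colEdge i0 (v + uv i) k) := rfl
      _ = 0 := hb
  -- choose N beyond all supports
  have hfin1 := crossSet_finite K i0 hK v
  have hfin2 := crossSet_finite K i0 hK (v + uv i)
  have hfin3 : {k : ℕ | s(v + k • uv i0, v + k • uv i0 + uv i) ∈ K}.Finite := by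
    have : {k : ℕ | s(v + k • uv i0, v + k • uv i0 + uv i) ∈ K} =
        (fun k => s(v + k • uv i0, v + k • uv i0 + uv i)) ⁻¹' K := rfl
    rw [this]
    exact Set.Finite.preimage (fun a _ b _ h => rung_inj i0 i hi v h) hK
  obtain ⟨N1, hN1⟩ := hfin1.bddAbove
  obtain ⟨N2, hN2⟩ := hfin2.bddAbove
  obtain ⟨N3, hN3⟩ := hfin3.bddAbove
  set N : ℕ := N1 + N2 + N3 + 1 with hNdef
  have hb1 : ∀ k, N ≤ k → colEdge i0 v k ∉ K := by
    intro k hk hmem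
    have := hN1 hmem
    omega
  have hb2 : ∀ k, N ≤ k → colEdge i0 (v + uv i) k ∉ K := by
    intro k hk hmem
    have := hN2 hmem
    omega
  have hb3 : ∀ k, N ≤ k → s(v + k • uv i0, v + k • uv i0 + uv i) ∉ K := by
    intro k hk hmem
    have := hN3 (by exact hmem)
    omega
  have hsum : ∑ k ∈ Finset.range N, (ind K (colEdge i0 v k) + r k + r (k + 1) +
      ind K (colEdge i0 (v + uv i) k)) = 0 := by
    rw [Finset.sum_congr rfl (fun k _ => hsq k), Finset.sum_const, smul_zero]
  have hsplit : ∑ k ∈ Finset.range N, (ind K (colEdge i0 v k) + r k + r (k + 1) +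
      ind K (colEdge i0 (v + uv i) k)) =
      (∑ k ∈ Finset.range N, ind K (colEdge i0 v k)) +
      (∑ k ∈ Finset.range N, (r k + r (k + 1))) +
      (∑ k ∈ Finset.range N, ind K (colEdge i0 (v + uv i) k)) := by
    rw [← Finset.sum_add_distrib, ← Finset.sum_add_distrib]
    exact Finset.sum_congr rfl fun k _ => by ring
  rw [hsplit, telescope2, ← gpar_eq_sum i0 hK v hb1, ← gpar_eq_sum i0 hK (v + uv i) hb2] at hsum
  have hrN : r N = 0 := ind_of_not_mem (hb3 N le_rfl)
  have hr0 : r 0 = ind K (s(v, v + uv i)) := by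
    rw [hr]
    simp only
    congr 1
    exact sym2_congr (by rw [zero_nsmul]; abel) (by rw [zero_nsmul]; abel)
  rw [hrN, hr0] at hsum
  have : ∀ x y z : ZMod 2, x + (y + 0) + z = 0 → x + z = y := by decide
  exact this _ _ _ hsum

lemma gpar_step (hK : K.Finite) (hnb : NoBoundary K) (i0 : Fin d) (i : Fin d) (v : V d) :
    gpar K i0 v + gpar K i0 (v + uv i) = ind K (s(v, v + uv i)) := by
  by_cases hi : i = i0
  · subst hi
    rw [gpar_vert K i hK v]
    have : ∀ x y : ZMod 2, (x + y) + y = x := by decide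
    exact this _ _
  · exact gpar_horiz hK hnb i0 i hi v

lemma gpar_adj (hK : K.Finite) (hnb : NoBoundary K) (i0 : Fin d) {x y : V d}
    (h : latAdj x y) :
    gpar K i0 x + gpar K i0 y = ind K (s(x, y)) := by
  obtain ⟨i, hi | hi⟩ := latAdj_cases h
  · rw [hi]; exact gpar_step hK hnb i0 i x
  · rw [hi, Sym2.eq_swap, add_comm]
    exact gpar_step hK hnb i0 i y

end GSec3

section Cobound
variable {d : ℕ} {K : Set (Sym2 (V d))}

lemma bd_gpar_eq (hK : K.Finite) (hnb : NoBoundary K)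
    (hedge : ∀ e ∈ K, ∃ x y, latAdj x y ∧ e = s(x, y)) (i0 : Fin d) :
    bd {v : V d | gpar K i0 v = 1} = K := by
  have hcase : ∀ a b : ZMod 2, a + b = 1 → (a = 1 ∧ ¬ b = 1) ∨ (b = 1 ∧ ¬ a = 1) := by decide
  ext e
  constructor
  · rintro ⟨x, y, hadj, hx, hy, rfl⟩
    have hsum := gpar_adj hK hnb i0 hadj
    have hx1 : gpar K i0 x = 1 := hx
    have hy0 : gpar K i0 y = 0 := by
      have : gpar K i0 y = 0 ∨ gpar K i0 y = 1 := by
        have : ∀ z : ZMod 2, z = 0 ∨ z = 1 := by decide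
        exact this _
      rcases this with h | h
      · exact h
      · exact absurd h hy
    rw [hx1, hy0] at hsum
    exact ind_eq_one_iff.mp (by rw [← hsum]; decide)
  · intro he
    obtain ⟨x, y, hadj, rfl⟩ := hedge e he
    have hsum := gpar_adj hK hnb i0 hadj
    rw [ind_of_mem he] at hsum
    rcases hcase _ _ hsum with ⟨h1, h2⟩ | ⟨h1, h2⟩
    · exact ⟨x, y, hadj, h1, h2, rfl⟩
    · exact ⟨y, x, latAdj_symm hadj, h1, h2, Sym2.eq_swap.symm⟩

lemma sym2_support_finite {α : Type*} (e : Sym2 α) : {u | u ∈ e}.Finite := by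
  induction e using Sym2.ind with
  | _ x y =>
    apply Set.Finite.subset ((Set.finite_singleton y).insert x)
    intro u hu
    rw [Set.mem_setOf_eq, Sym2.mem_iff] at hu
    exact hu

lemma gpar_finite_support (hK : K.Finite) (hnb : NoBoundary K)
    (hedge : ∀ e ∈ K, ∃ x y, latAdj x y ∧ e = s(x, y)) (i0 i1 : Fin d) (h10 : i1 ≠ i0) :
    {v : V d | gpar K i0 v = 1}.Finite := by
  classical
  by_cases hKe : K = ∅
  · have : {v : V d | gpar K i0 v = 1} = ∅ := by
      ext v
      simp only [Set.mem_setOf_eq, Set.mem_empty_iff_false, iff_false]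
      have hcs : crossSet K i0 v = ∅ := by
        ext k
        simp [crossSet, hKe]
      rw [gpar, hcs, Set.ncard_empty, Nat.cast_zero]
      decide
    rw [this]; exact Set.finite_empty
  -- B : vertices of K
  set B : Set (V d) := ⋃ e ∈ K, {u | u ∈ e} with hBdef
  have hBfin : B.Finite := Set.Finite.biUnion hK fun e _ => sym2_support_finite e
  have hBne : B.Nonempty := by
    obtain ⟨e, he⟩ := Set.nonempty_iff_ne_empty.mpr hKe
    obtain ⟨x, y, _, rfl⟩ := hedge e he
    exact ⟨x, Set.mem_biUnion he (Sym2.mem_iff.mpr (Or.inl rfl))⟩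
  obtain ⟨m, hm⟩ : ∃ m : ℤ, ∀ u ∈ B, m ≤ u i0 := by
    obtain ⟨m, hm⟩ := (hBfin.image (fun u => u i0)).bddBelow
    exact ⟨m, fun u hu => hm (Set.mem_image_of_mem _ hu)⟩
  obtain ⟨M1, hM1⟩ : ∃ M1 : ℤ, ∀ u ∈ B, u i1 ≤ M1 := by
    obtain ⟨M1, hM1⟩ := (hBfin.image (fun u => u i1)).bddAbove
    exact ⟨M1, fun u hu => hM1 (Set.mem_image_of_mem _ hu)⟩
  have hmemB : ∀ {x : V d} {e : Sym2 (V d)}, e ∈ K → x ∈ e → x ∈ B :=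
    fun he hx => Set.mem_biUnion he hx
  -- edges touching low vertices are not in K
  have hlowK : ∀ x y : V d, x i0 < m → s(x, y) ∉ K := by
    intro x y hx hmem
    exact absurd (hm x (hmemB hmem (Sym2.mem_iff.mpr (Or.inl rfl)))) (by omega)
  have hadd : ∀ a b : ZMod 2, a + b = 0 → a = b := by decide
  -- sideways invariance at low heights
  have hside : ∀ v : V d, v i0 < m → gpar K i0 v = gpar K i0 (v + uv i1) := by
    intro v hv
    apply hadd
    rw [gpar_step hK hnb i0 i1 v, ind_of_not_mem (hlowK _ _ hv)]
  have hcoord : ∀ (v : V d) (R : ℕ), (v + R • uv i1) i0 = v i0 := by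
    intro v R
    simp [uv, Ne.symm h10]
  have hiter : ∀ (R : ℕ) (v : V d), v i0 < m → gpar K i0 v = gpar K i0 (v + R • uv i1) := by
    intro R
    induction R with
    | zero => intro v hv; rw [zero_nsmul, add_zero]
    | succ R ih =>
      intro v hv
      rw [ih v hv, succ_nsmul, ← add_assoc]
      apply hside
      rw [hcoord v R]
      exact hv
  have hfar : ∀ v : V d, (∀ u ∈ B, u i1 < v i1) → gpar K i0 v = 0 := by
    intro v hv
    have : crossSet K i0 v = ∅ := by
      ext k
      simp only [crossSet, Set.mem_setOf_eq, Set.mem_empty_iff_false, iff_false]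
      intro hmem
      have hu : v + k • uv i0 ∈ B := hmemB hmem (Sym2.mem_iff.mpr (Or.inl rfl))
      have := hv _ hu
      rw [nsmul_uv_ne i0 h10 k v] at this
      omega
    rw [gpar, this, Set.ncard_empty, Nat.cast_zero]
  have hlow : ∀ v : V d, v i0 < m → gpar K i0 v = 0 := by
    intro v hv
    set R : ℕ := (M1 - v i1 + 1).toNat with hR
    rw [hiter R v hv]
    apply hfar
    intro u hu
    have h1 := hM1 u hu
    have h2 : (v + R • uv i1) i1 = v i1 + R := by
      simp [uv]
    rw [h2]
    omega
  -- A is contained in a finite union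
  have hsub : {v : V d | gpar K i0 v = 1} ⊆
      ⋃ u ∈ B, (fun t => Function.update u i0 t) '' Set.Icc m (u i0) := by
    intro v hv
    have hv1 : gpar K i0 v = 1 := hv
    have hvm : m ≤ v i0 := by
      by_contra hc
      rw [hlow v (by omega)] at hv1
      exact absurd hv1 (by decide)
    have hne : (crossSet K i0 v).Nonempty := by
      rw [Set.nonempty_iff_ne_empty]
      intro hc
      rw [gpar, hc, Set.ncard_empty, Nat.cast_zero] at hv1
      exact absurd hv1 (by decide)
    obtain ⟨k, hk⟩ := hne
    have hu : v + k • uv i0 ∈ B := hmemB hk (Sym2.mem_iff.mpr (Or.inl rfl))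
    refine Set.mem_biUnion hu ⟨v i0, ⟨hvm, ?_⟩, ?_⟩
    · rw [nsmul_uv_self]
      omega
    · funext j
      show Function.update (v + k • uv i0) i0 (v i0) j = v j
      by_cases hj : j = i0
      · subst hj; rw [Function.update_self]
      · rw [Function.update_of_ne hj, nsmul_uv_ne i0 hj k v]
  refine Set.Finite.subset (Set.Finite.biUnion hBfin fun u _ => ?_) hsub
  exact (Set.finite_Icc m (u i0)).image _

lemma exists_cobound (hK : K.Finite) (hnb : NoBoundary K)
    (hedge : ∀ e ∈ K, ∃ x y, latAdj x y ∧ e = s(x, y)) (i0 i1 : Fin d) (h10 : i1 ≠ i0) :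
    ∃ A : Set (V d), A.Finite ∧ bd A = K :=
  ⟨{v : V d | gpar K i0 v = 1}, gpar_finite_support hK hnb hedge i0 i1 h10,
    bd_gpar_eq hK hnb hedge i0⟩

end Cobound

section Limit
variable {d : ℕ} {W : ℕ → Set (V d)}

lemma eventually_PiS_of_frequently (hmono : Monotone W) {e : Sym2 (V d)}
    (h : ∃ᶠ n in atTop, e ∈ PiS (W n)) : ∀ᶠ n in atTop, e ∈ PiS (W n) := by
  obtain ⟨n0, hn0⟩ := h.exists
  obtain ⟨x, y, hadj, -, -, rfl⟩ := hn0
  have h' : (∃ᶠ n in atTop, x ∈ W n ∧ toInfOff (W n) y) ∨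
      (∃ᶠ n in atTop, y ∈ W n ∧ toInfOff (W n) x) := by
    rw [← frequently_or_distrib]
    exact h.mono fun n hn => (mem_PiS_iff hadj).mp hn
  have key : ∀ (a b : V d), (∃ᶠ n in atTop, a ∈ W n ∧ toInfOff (W n) b) →
      ∀ᶠ n in atTop, a ∈ W n ∧ toInfOff (W n) b := by
    intro a b hab
    have h1 : ∀ᶠ n in atTop, a ∈ W n := by
      obtain ⟨n1, hn1⟩ := hab.exists
      exact eventually_atTop.mpr ⟨n1, fun m hm => hmono hm hn1.1⟩
    have h2 : ∀ n, toInfOff (W n) b := by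
      intro n
      obtain ⟨m, hm1, hm2⟩ := (hab.and_eventually (eventually_ge_atTop n)).exists
      exact toInfOff_anti (hmono hm2) hm1.2
    exact h1.mono fun n hn => ⟨hn, h2 n⟩
  rcases h' with h' | h'
  · exact (key x y h').mono fun n hn => (mem_PiS_iff hadj).mpr (Or.inl hn)
  · exact (key y x h').mono fun n hn => (mem_PiS_iff hadj).mpr (Or.inr hn)

end Limit


/-- For an increasing sequence `(W_n)` of finite connected subsets of `ℤ^d`
with `|W_n| → ∞`, the limit `Π_∞` of the plaquette sets `Π(W_n)` (the set of
plaquettes eventually belonging to `Π(W_n)`) has empty boundary and has no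
finite connected component in the plaquette adjacency graph. -/
theorem PiS_limit_noBoundary_no_finite_component (d : ℕ) (hd : 2 ≤ d)
    (W : ℕ → Set (V d))
    (hmono : Monotone W) (hfin : ∀ n, (W n).Finite)
    (hconn : ∀ n, IsLatConnected (W n))
    (hcard : Tendsto (fun n => (W n).ncard) atTop atTop)
    (L : Set (Sym2 (V d)))
    (hL : ∀ π : Sym2 (V d), π ∈ L ↔ ∀ᶠ n in atTop, π ∈ PiS (W n)) :
    NoBoundary L ∧
      ∀ π ∈ L,
        {π' | ReflTransGen (fun a b => plaqAdj a b ∧ a ∈ L ∧ b ∈ L) π π'}.Infinite := by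
  classical
  have hd0 : 0 < d := by omega
  have hd1 : 1 < d := by omega
  set i0 : Fin d := ⟨0, hd0⟩ with hi0
  set i1 : Fin d := ⟨1, hd1⟩ with hi1
  have h10 : i1 ≠ i0 := by simp [hi0, hi1, Fin.ext_iff]
  have hnotL : ∀ e : Sym2 (V d), e ∉ L → ∀ᶠ n in atTop, e ∉ PiS (W n) := by
    intro e he
    by_contra hc
    rw [Filter.not_eventually] at hc
    exact he ((hL e).mpr (eventually_PiS_of_frequently hmono
      (hc.mono fun n hn => not_not.mp hn)))
  have hag : ∀ e : Sym2 (V d), ∀ᶠ n in atTop, (e ∈ PiS (W n) ↔ e ∈ L) := by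
    intro e
    by_cases he : e ∈ L
    · exact ((hL e).mp he).mono fun n hn => iff_of_true hn he
    · exact (hnotL e he).mono fun n hn => iff_of_false hn he
  constructor
  · -- NoBoundary L
    intro F
    obtain ⟨n, h1, h2, h3, h4⟩ :=
      ((hag (s(F.corner, F.corner + uv F.i))).and ((hag (s(F.corner, F.corner + uv F.j))).and
        ((hag (s(F.corner + uv F.i, F.corner + uv F.i + uv F.j))).and
          (hag (s(F.corner + uv F.j, F.corner + uv F.i + uv F.j)))))).exists
    have hEq : edgesOf F ∩ L = edgesOf F ∩ PiS (W n) := by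
      ext e
      constructor
      · rintro ⟨heF, heL⟩
        refine ⟨heF, ?_⟩
        simp only [edgesOf, Set.mem_insert_iff, Set.mem_singleton_iff] at heF
        rcases heF with rfl | rfl | rfl | rfl
        · exact h1.mpr heL
        · exact h2.mpr heL
        · exact h3.mpr heL
        · exact h4.mpr heL
      · rintro ⟨heF, heP⟩
        refine ⟨heF, ?_⟩
        simp only [edgesOf, Set.mem_insert_iff, Set.mem_singleton_iff] at heF
        rcases heF with rfl | rfl | rfl | rfl
        · exact h1.mp heP
        · exact h2.mp heP
        · exact h3.mp heP
        · exact h4.mp heP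
    rw [hEq]
    exact noBoundary_PiS (W n) F
  · -- no finite components
    intro π hπ
    set C := {π' | ReflTransGen (fun a b => plaqAdj a b ∧ a ∈ L ∧ b ∈ L) π π'} with hCdef
    by_contra hCinf
    have hCfin : C.Finite := Set.not_infinite.mp hCinf
    have hπC : π ∈ C := ReflTransGen.refl
    have hCL : C ⊆ L := by
      intro e he
      induction he with
      | refl => exact hπ
      | tail _ hstep => exact hstep.2.2
    set 𝒞 : Set (Set (V d)) := {A | A.Finite ∧ bd A ⊆ C} with h𝒞def
    have h𝒞fin : 𝒞.Finite := by
      apply Set.Finite.of_finite_image (f := bd)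
      · exact hCfin.finite_subsets.subset (by rintro _ ⟨A, hA, rfl⟩; exact hA.2)
      · intro A1 hA1 A2 hA2 h12
        exact bd_unique i0 hA1.1 hA2.1 h12
    obtain ⟨M, hM⟩ : ∃ M : ℕ, ∀ A ∈ 𝒞, A.ncard ≤ M := by
      obtain ⟨M, hM⟩ := (h𝒞fin.image Set.ncard).bddAbove
      exact ⟨M, fun A hA => hM (Set.mem_image_of_mem _ hA)⟩
    have hNfin : ((⋃ e ∈ C, {e' | plaqAdj e e'}) \ L).Finite :=
      (hCfin.biUnion fun e _ => nbrs_finite e).diff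
    have hev1 : ∀ᶠ n in atTop, ∀ e ∈ C, e ∈ PiS (W n) :=
      (eventually_all_finite hCfin).mpr fun e he => (hL e).mp (hCL he)
    have hev2 : ∀ᶠ n in atTop, ∀ e ∈ (⋃ e ∈ C, {e' | plaqAdj e e'}) \ L, e ∉ PiS (W n) :=
      (eventually_all_finite hNfin).mpr fun e he => hnotL e he.2
    have hev3 : ∀ᶠ n in atTop, M < (W n).ncard := hcard.eventually_gt_atTop M
    obtain ⟨n, hn1, hn2, hn3⟩ := (hev1.and (hev2.and hev3)).exists
    set K : Set (Sym2 (V d)) :=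
      {e | ReflTransGen (fun a b => plaqAdj a b ∧ a ∈ PiS (W n) ∧ b ∈ PiS (W n)) π e} with hKdef
    have hπn : π ∈ PiS (W n) := hn1 π hπC
    have hKPi : K ⊆ PiS (W n) := by
      intro e he
      induction he with
      | refl => exact hπn
      | tail _ hstep => exact hstep.2.2
    have hKC : K ⊆ C := by
      intro e he
      induction he with
      | refl => exact hπC
      | @tail b c hab hstep ih =>
        by_cases hcL : c ∈ L
        · exact ReflTransGen.tail ih ⟨hstep.1, hCL ih, hcL⟩
        · exact absurd hstep.2.2
            (hn2 c ⟨Set.mem_biUnion ih (show plaqAdj b c from hstep.1), hcL⟩)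
    have hKclosed : ∀ a ∈ K, ∀ b, plaqAdj a b → b ∈ PiS (W n) → b ∈ K :=
      fun a ha b hadj hb => ReflTransGen.tail ha ⟨hadj, hKPi ha, hb⟩
    have hKfin : K.Finite := hCfin.subset hKC
    have hKnb : NoBoundary K := by
      intro F
      by_cases hF : (edgesOf F ∩ K) = ∅
      · rw [hF]
        simp
      · obtain ⟨e0, he0F, he0K⟩ := Set.nonempty_iff_ne_empty.mpr hF
        have hEq : edgesOf F ∩ K = edgesOf F ∩ PiS (W n) := by
          ext e
          constructor
          · rintro ⟨heF, heK⟩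
            exact ⟨heF, hKPi heK⟩
          · rintro ⟨heF, heP⟩
            by_cases hee : e = e0
            · exact ⟨heF, hee ▸ he0K⟩
            · exact ⟨heF, hKclosed e0 he0K e ⟨Ne.symm hee, F, he0F, heF⟩ heP⟩
        rw [hEq]
        exact noBoundary_PiS (W n) F
    have hKedge : ∀ e ∈ K, ∃ x y, latAdj x y ∧ e = s(x, y) := by
      intro e he
      obtain ⟨x, y, hadj, -, -, heq⟩ := hKPi he
      exact ⟨x, y, hadj, heq⟩
    obtain ⟨A, hAfin, hAbd⟩ := exists_cobound hKfin hKnb hKedge i0 i1 h10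
    obtain ⟨x, y, hadj, hxW, hyI, hπeq⟩ := hπn
    have hπK : π ∈ K := ReflTransGen.refl
    have hyA : y ∉ A := by
      intro hyA
      have hsub : compOff (W n) y ⊆ A := by
        intro z hz
        induction hz with
        | refl => exact hyA
        | @tail u z hru hstep ih =>
          have hnotK : s(u, z) ∉ K := by
            intro hmem
            obtain ⟨x', y', hadj', hx', hy', heq⟩ := hKPi hmem
            rw [Sym2.eq_iff] at heq
            rcases heq with ⟨hq1, hq2⟩ | ⟨hq1, hq2⟩
            · exact hstep.2.1 (by rw [hq1]; exact hx')
            · exact hstep.2.2 (by rw [hq2]; exact hx')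
          rw [← hAbd] at hnotK
          by_contra hzA
          exact hnotK ((mem_bd_iff hstep.1).mpr (Or.inl ⟨ih, hzA⟩))
      exact hyI.2 (hAfin.subset hsub)
    have hxA : x ∈ A := by
      have hmem : s(x, y) ∈ bd A := by
        rw [hAbd, ← hπeq]
        exact hπK
      rcases (mem_bd_iff hadj).mp hmem with ⟨hq1, _⟩ | ⟨hq1, _⟩
      · exact hq1
      · exact absurd hq1 hyA
    have hWA : W n ⊆ A := by
      intro w hw
      have hpath := hconn n x hxW w hw
      clear hw
      induction hpath with
      | refl => exact hxA
      | @tail u z hru hstep ih =>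
        have hnotK : s(u, z) ∉ K := by
          intro hmem
          obtain ⟨x', y', hadj', hx', hy', heq⟩ := hKPi hmem
          rw [Sym2.eq_iff] at heq
          rcases heq with ⟨hq1, hq2⟩ | ⟨hq1, hq2⟩
          · exact hy'.1 (by rw [← hq2]; exact hstep.2.2)
          · exact hy'.1 (by rw [← hq1]; exact hstep.2.1)
        rw [← hAbd] at hnotK
        by_contra hzA
        exact hnotK ((mem_bd_iff hstep.1).mpr (Or.inl ⟨ih, hzA⟩))
    have hA𝒞 : A ∈ 𝒞 := ⟨hAfin, by rw [hAbd]; exact hKC⟩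
    have hbound := hM A hA𝒞
    have hle : (W n).ncard ≤ A.ncard := Set.ncard_le_ncard hWA hAfin
    omega
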